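/- BFV multiplication rounding-error bound: let n ≥ 1, q > t ≥ 2, work in R = ℤ[x]/(xⁿ+1), and let δ ≥ 0 be an expansion bound valid for polynomials with real coefficients modulo xⁿ+1. For h₀, h₁, h₂, s ∈ R, define the rounding error r_a = ((t/q)·h₀ − ⌊(t/q)·h₀⌉) + ((t/q)·h₁ − ⌊(t/q)·h₁⌉)·s + ((t/q)·h₂ − ⌊(t/q)·h₂⌉)·s², where ⌊·⌉ rounds each coefficient to the nearest integer. Then ‖r_a‖ ≤ 1/2 + (δ/2)·‖s‖ + (δ²/2)·‖s‖², and in particular ‖r_a‖ ≤ (1/2)·(1 + δ·‖s‖)². -/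

import Mathlib

open Polynomial

/-- The sup-norm (maximum absolute value of the coefficients of index `< n`) of a
real polynomial. -/
noncomputable def pnormR (n : ℕ) (f : Polynomial ℝ) : ℝ :=
  ⨆ i : Fin n, |f.coeff (i : ℕ)|

/-- Coefficientwise rounding to the nearest integer, `⌊·⌉`. -/
noncomputable def roundPoly (f : Polynomial ℝ) : Polynomial ℝ :=
  f.sum fun i a => Polynomial.C ((round a : ℤ) : ℝ) * Polynomial.X ^ i

/-- The inclusion `ℤ[x] → ℝ[x]`. -/
noncomputable def toR : Polynomial ℤ →+* Polynomial ℝ :=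
  Polynomial.mapRingHom (Int.castRingHom ℝ)

lemma roundPoly_coeff (f : Polynomial ℝ) (k : ℕ) :
    (roundPoly f).coeff k = ((round (f.coeff k) : ℤ) : ℝ) := by
  unfold roundPoly
  rw [Polynomial.sum_def, Polynomial.finset_sum_coeff]
  simp only [coeff_C_mul, coeff_X_pow, mul_ite, mul_one, mul_zero]
  rw [Finset.sum_ite_eq f.support k fun i => ((round (f.coeff i) : ℤ) : ℝ)]
  by_cases h : k ∈ f.support
  · simp [h]
  · simp [h, Polynomial.notMem_support_iff.mp h]

lemma pnormR_nonneg (n : ℕ) (hn : 1 ≤ n) (f : Polynomial ℝ) : 0 ≤ pnormR n f := by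
  have : Nonempty (Fin n) := ⟨⟨0, hn⟩⟩
  exact le_ciSup_of_le (Set.Finite.bddAbove (Set.finite_range _)) ⟨0, hn⟩ (abs_nonneg _)

lemma pnormR_le (n : ℕ) (hn : 1 ≤ n) (f : Polynomial ℝ) (c : ℝ)
    (h : ∀ i : Fin n, |f.coeff (i : ℕ)| ≤ c) : pnormR n f ≤ c := by
  have : Nonempty (Fin n) := ⟨⟨0, hn⟩⟩
  exact ciSup_le h

lemma coeff_le_pnormR (n : ℕ) (f : Polynomial ℝ) (i : Fin n) :
    |f.coeff (i : ℕ)| ≤ pnormR n f := by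
  unfold pnormR
  exact le_ciSup (Set.Finite.bddAbove (Set.finite_range fun j : Fin n => |f.coeff (j:ℕ)|)) i

lemma pnormR_add (n : ℕ) (hn : 1 ≤ n) (f g : Polynomial ℝ) :
    pnormR n (f + g) ≤ pnormR n f + pnormR n g := by
  refine pnormR_le n hn _ _ fun i => ?_
  simpa using (abs_add_le (f.coeff i) (g.coeff i)).trans
    (add_le_add (coeff_le_pnormR n f i) (coeff_le_pnormR n g i))

lemma pnormR_round_err (n : ℕ) (hn : 1 ≤ n) (f : Polynomial ℝ) :
    pnormR n (f - roundPoly f) ≤ 1 / 2 := by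
  refine pnormR_le n hn _ _ fun i => ?_
  rw [Polynomial.coeff_sub, roundPoly_coeff]
  exact abs_sub_round _

lemma degree_round_err_lt (n : ℕ) (f : Polynomial ℝ) (hf : f.degree < (n : WithBot ℕ)) :
    (f - roundPoly f).degree < (n : WithBot ℕ) := by
  rw [Polynomial.degree_lt_iff_coeff_zero] at hf ⊢
  intro m hm
  rw [Polynomial.coeff_sub, roundPoly_coeff, hf m hm]
  simp

lemma degree_Cmul_toR_lt (n : ℕ) (c : ℝ) (h : Polynomial ℤ)
    (hd : h.degree < (n : WithBot ℕ)) :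
    (Polynomial.C c * toR h).degree < (n : WithBot ℕ) := by
  rw [← Polynomial.smul_eq_C_mul]
  exact lt_of_le_of_lt ((Polynomial.degree_smul_le _ _).trans Polynomial.degree_map_le) hd

/-- BFV multiplication rounding-error bound: with `δ` an expansion bound for real
polynomials modulo `xⁿ+1`, the rounding error
`r_a = ((t/q)·h₀ - ⌊(t/q)·h₀⌉) + ((t/q)·h₁ - ⌊(t/q)·h₁⌉)·s + ((t/q)·h₂ - ⌊(t/q)·h₂⌉)·s²`
(products reduced modulo `xⁿ+1`) satisfies
`‖r_a‖ ≤ 1/2 + (δ/2)·‖s‖ + (δ²/2)·‖s‖²` and `‖r_a‖ ≤ (1/2)·(1 + δ·‖s‖)²`. -/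
theorem bfv_mult_rounding_error_bound (n : ℕ) (hn : 1 ≤ n) (q t : ℕ) (ht : 2 ≤ t) (htq : t < q)
    (δ : ℝ) (hδ0 : 0 ≤ δ)
    (hδ : ∀ a b : Polynomial ℝ, a.degree < (n : WithBot ℕ) → b.degree < (n : WithBot ℕ) →
      pnormR n ((a * b) %ₘ ((X : Polynomial ℝ) ^ n + 1)) ≤ δ * pnormR n a * pnormR n b)
    (h₀ h₁ h₂ s : Polynomial ℤ)
    (hd₀ : h₀.degree < (n : WithBot ℕ)) (hd₁ : h₁.degree < (n : WithBot ℕ))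
    (hd₂ : h₂.degree < (n : WithBot ℕ)) (hds : s.degree < (n : WithBot ℕ))
    (ra : Polynomial ℝ)
    (hra : ra =
      (Polynomial.C ((t : ℝ) / (q : ℝ)) * toR h₀
        - roundPoly (Polynomial.C ((t : ℝ) / (q : ℝ)) * toR h₀))
      + ((Polynomial.C ((t : ℝ) / (q : ℝ)) * toR h₁
        - roundPoly (Polynomial.C ((t : ℝ) / (q : ℝ)) * toR h₁)) * toR s)
          %ₘ ((X : Polynomial ℝ) ^ n + 1)
      + ((Polynomial.C ((t : ℝ) / (q : ℝ)) * toR h₂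
        - roundPoly (Polynomial.C ((t : ℝ) / (q : ℝ)) * toR h₂))
          * ((toR s * toR s) %ₘ ((X : Polynomial ℝ) ^ n + 1)))
          %ₘ ((X : Polynomial ℝ) ^ n + 1)) :
    pnormR n ra ≤ 1 / 2 + δ / 2 * pnormR n (toR s) + δ ^ 2 / 2 * (pnormR n (toR s)) ^ 2 ∧
    pnormR n ra ≤ 1 / 2 * (1 + δ * pnormR n (toR s)) ^ 2 := by
  set c := ((t : ℝ) / (q : ℝ))
  set M := (X : Polynomial ℝ) ^ n + 1 with hM
  have hMonic : M.Monic := by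
    have := Polynomial.monic_X_pow_add_C (1 : ℝ) (by omega : n ≠ 0)
    simpa [hM] using this
  have hMdeg : M.degree = (n : WithBot ℕ) := by
    have := Polynomial.degree_X_pow_add_C (by omega : 0 < n) (1 : ℝ)
    simpa [hM] using this
  set N := pnormR n (toR s) with hN
  have hN0 : 0 ≤ N := pnormR_nonneg n hn _
  set e₀ := Polynomial.C c * toR h₀ - roundPoly (Polynomial.C c * toR h₀) with he₀
  set e₁ := Polynomial.C c * toR h₁ - roundPoly (Polynomial.C c * toR h₁) with he₁
  set e₂ := Polynomial.C c * toR h₂ - roundPoly (Polynomial.C c * toR h₂) with he₂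
  have de₀ : e₀.degree < (n : WithBot ℕ) :=
    degree_round_err_lt n _ (degree_Cmul_toR_lt n c h₀ hd₀)
  have de₁ : e₁.degree < (n : WithBot ℕ) :=
    degree_round_err_lt n _ (degree_Cmul_toR_lt n c h₁ hd₁)
  have de₂ : e₂.degree < (n : WithBot ℕ) :=
    degree_round_err_lt n _ (degree_Cmul_toR_lt n c h₂ hd₂)
  have ds : (toR s).degree < (n : WithBot ℕ) :=
    lt_of_le_of_lt Polynomial.degree_map_le hds
  have ne₀ : pnormR n e₀ ≤ 1 / 2 := pnormR_round_err n hn _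
  have ne₁ : pnormR n e₁ ≤ 1 / 2 := pnormR_round_err n hn _
  have ne₂ : pnormR n e₂ ≤ 1 / 2 := pnormR_round_err n hn _
  have ne₁0 : 0 ≤ pnormR n e₁ := pnormR_nonneg n hn _
  have ne₂0 : 0 ≤ pnormR n e₂ := pnormR_nonneg n hn _
  -- bound on B
  have hB : pnormR n ((e₁ * toR s) %ₘ M) ≤ δ / 2 * N := by
    have h := hδ e₁ (toR s) de₁ ds
    rw [← hN] at h
    have h1 : δ * pnormR n e₁ * N ≤ δ * (1 / 2) * N :=
      mul_le_mul_of_nonneg_right (mul_le_mul_of_nonneg_left ne₁ hδ0) hN0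
    exact h.trans (h1.trans_eq (by ring))
  -- bound on s*s mod
  set sq := (toR s * toR s) %ₘ M with hsq
  have hsqn : pnormR n sq ≤ δ * N * N := hδ (toR s) (toR s) ds ds
  have hsq0 : 0 ≤ pnormR n sq := pnormR_nonneg n hn _
  have hsqd : sq.degree < (n : WithBot ℕ) := by
    have := Polynomial.degree_modByMonic_lt (toR s * toR s) hMonic
    rwa [hMdeg] at this
  have hC : pnormR n ((e₂ * sq) %ₘ M) ≤ δ ^ 2 / 2 * N ^ 2 := by
    have h := hδ e₂ sq de₂ hsqd
    have h1 : δ * pnormR n e₂ * pnormR n sq ≤ δ * (1 / 2) * (δ * N * N) := by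
      apply mul_le_mul (mul_le_mul_of_nonneg_left ne₂ hδ0) hsqn hsq0 (by positivity)
    exact h.trans (h1.trans_eq (by ring))
  have hA : pnormR n e₀ ≤ 1 / 2 := ne₀
  have tri : pnormR n ra ≤ pnormR n e₀ + pnormR n ((e₁ * toR s) %ₘ M)
      + pnormR n ((e₂ * sq) %ₘ M) := by
    rw [hra]
    exact (pnormR_add n hn _ _).trans (add_le_add (pnormR_add n hn _ _) le_rfl)
  have main : pnormR n ra ≤ 1 / 2 + δ / 2 * N + δ ^ 2 / 2 * N ^ 2 := by
    calc pnormR n ra ≤ _ := tri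
      _ ≤ 1 / 2 + δ / 2 * N + δ ^ 2 / 2 * N ^ 2 := by
          exact add_le_add (add_le_add hA hB) hC
  refine ⟨main, main.trans ?_⟩
  nlinarith [mul_nonneg hδ0 hN0]
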